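/- arXiv:0804.2908 — 2 statements merged into one kernel-verified Lean document; each statement's English description precedes it below -/
import Mathlib

section
/- Let T be an n-consistent ∀∃-theory in a countable language. Then for every n-generated model M of T, rk(M) ≤ Rk(M), where rk is the rank defined with full types and Rk is the rank defined with universal types. -/
open FirstOrder FirstOrder.Language Cardinal

namespace Paper

variable (L : FirstOrder.Language.{0, 0})

/-- A tuple `a` generates `M`: every element is the value of a term at `a`. -/
def Generates {M : Type*} [L.Structure M] {n : ℕ} (a : Fin n → M) : Prop :=
  ∀ y : M, ∃ t : L.Term (Fin n), t.realize a = y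

/-- A type over the language `L(c₁,…,cₙ)` in `k` free variables, represented as a set of
`L`-formulas in variables `Fin n ⊕ Fin k` (the first block playing the role of the constants). -/
def NType (n : ℕ) : Type := Σ k : ℕ, Set (L.Formula (Fin n ⊕ Fin k))

variable {L}

/-- The pair `(M, a)` realizes the type `p` (in the language with the constants interpreted
as `a`). -/
def RealizesNType {M : Type*} [L.Structure M] {n : ℕ} (a : Fin n → M) (p : NType L n) : Prop :=
  ∃ v : Fin p.1 → M, ∀ φ ∈ p.2, φ.Realize (Sum.elim a v)

variable (L) in
/-- The type `pₙ(y) = { y ≠ τ(c̄) | τ an L-term }`. -/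
def pType (n : ℕ) : NType L n :=
  ⟨1, { φ | ∃ t : L.Term (Fin n),
    φ = (Term.equal (t.relabel Sum.inl) (Term.var (Sum.inr 0))).not }⟩

/-- The complete type `p_ā(M)` of a tuple, viewed as a set of sentences of `L(c̄)`. -/
def ctype {M : Type*} [L.Structure M] {n : ℕ} (a : Fin n → M) : NType L n :=
  ⟨0, { φ | ∃ ψ : L.Formula (Fin n), ψ.Realize a ∧ φ = ψ.relabel Sum.inl }⟩

/-- A type (in the language with constants) is supported over a class `K` of models-with-tuples
if some formula, satisfiable in `K`, forces realization of the type throughout `K`. -/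
def Supported {T : L.Theory} {n : ℕ} (K : Set (Σ M : Theory.ModelType.{0, 0, 0} T, Fin n → M))
    (p : NType L n) : Prop :=
  ∃ φ : L.Formula (Fin n ⊕ Fin p.1),
    (∃ P ∈ K, ∃ v : Fin p.1 → P.1, φ.Realize (Sum.elim P.2 v)) ∧
    ∀ P ∈ K, ∀ v : Fin p.1 → P.1, φ.Realize (Sum.elim P.2 v) →
      ∀ ψ ∈ p.2, ψ.Realize (Sum.elim P.2 v)

/-- `rk`: `RankEq T n α M` means the `n`-rank of `M` is `α`. Defined by transfinite
recursion: the rank is `α ≥ 1` iff for every generating `n`-tuple `ā`, `p_ā(M)` is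
supported over the class of models (with generating tuple) of `T` omitting `pₙ` and the
complete types of all models of smaller rank. -/
def RankEq (T : L.Theory) (n : ℕ) : Ordinal.{0} → Theory.ModelType.{0, 0, 0} T → Prop :=
  Ordinal.lt_wf.fix fun α ih M =>
    1 ≤ α ∧ (∃ a : Fin n → M, Generates L a) ∧
      ∀ a : Fin n → M, Generates L a →
        Supported
          { P : Σ N : T.ModelType, Fin n → N |
            ¬ RealizesNType (L := L) P.2 (pType L n) ∧
            ∀ β : Ordinal, (h : β < α) → ∀ N : T.ModelType, ih β h N →
              ∀ b : Fin n → N, Generates L b → ¬ RealizesNType (L := L) P.2 (ctype (L := L) b) }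
          (ctype a)

/-- The class `K(T|P_{n,α})`: models of `T` with a distinguished `n`-tuple, omitting `pₙ`
(equivalently, generated by the tuple) and omitting the complete type of every `n`-generated
model of `T` of rank `< α`. -/
def Kclass (T : L.Theory) (n : ℕ) (α : Ordinal.{0}) :
    Set (Σ M : Theory.ModelType.{0, 0, 0} T, Fin n → M) :=
  { P | ¬ RealizesNType (L := L) P.2 (pType L n) ∧
    ∀ β : Ordinal, β < α → ∀ N : T.ModelType, RankEq T n β N →
      ∀ b : Fin n → N, Generates L b → ¬ RealizesNType (L := L) P.2 (ctype (L := L) b) }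

variable (L) in
/-- `n`-generated models of `T` (with countable carrier). -/
abbrev NGenModel (T : L.Theory) (n : ℕ) : Type 1 :=
  { M : Theory.ModelType.{0, 0, 0} T // ∃ a : Fin n → M, Generates L a }

instance isoSetoid {T : L.Theory} {n : ℕ} : Setoid (NGenModel L T n) where
  r M N := Nonempty (M.1 ≃[L] N.1)
  iseqv := ⟨fun M => ⟨FirstOrder.Language.Equiv.refl L M.1⟩, fun ⟨e⟩ => ⟨e.symm⟩, fun ⟨e⟩ ⟨f⟩ => ⟨FirstOrder.Language.Equiv.comp f e⟩⟩

variable (L) in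
/-- `α_n(T)`: the number of isomorphism classes of `n`-generated models of `T`. -/
def alphaCard (T : L.Theory) (n : ℕ) : Cardinal.{1} :=
  Cardinal.mk (Quotient (isoSetoid (L := L) (T := T) (n := n)))

variable (L) in
/-- `T` is `n`-consistent: it has an `n`-generated model. -/
def NConsistent (T : L.Theory) (n : ℕ) : Prop :=
  ∃ M : Theory.ModelType.{0, 0, 0} T, ∃ a : Fin n → M, Generates L a


/-! ### Universal / existential formulas, ∀∃ theories -/

variable (L) in
/-- A universal formula: universal quantifiers over a quantifier-free formula. -/
def IsUniversalFormula {α : Type} (φ : L.Formula α) : Prop :=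
  ∃ (k : ℕ) (ψ : L.BoundedFormula α k), ψ.IsQF ∧ φ = ψ.alls

variable (L) in
/-- An existential formula: existential quantifiers over a quantifier-free formula. -/
def IsExistentialFormula {α : Type} (φ : L.Formula α) : Prop :=
  ∃ (k : ℕ) (ψ : L.BoundedFormula α k), ψ.IsQF ∧ φ = ψ.exs

/-- Iterated existential quantification of the last `k` bounded variables. -/
def exsTo {α : Type} : ∀ {m k : ℕ}, L.BoundedFormula α (m + k) → L.BoundedFormula α m
  | _, 0, φ => φ
  | _, _ + 1, φ => exsTo φ.ex

variable (L) in
/-- A `∀∃`-sentence: `∀ x̄ ∃ ȳ ψ` with `ψ` quantifier-free. -/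
def IsAESentence (σ : L.Sentence) : Prop :=
  ∃ (m k : ℕ) (ψ : L.BoundedFormula Empty (m + k)), ψ.IsQF ∧ σ = (exsTo ψ).alls

variable (L) in
/-- A `∀∃`-theory. -/
def IsAETheory (T : L.Theory) : Prop := ∀ σ ∈ T, IsAESentence L σ

/-- The universal type `p_{ā,∀}(M)` of a tuple: universal sentences of `L(c̄)` true of `ā`. -/
def utype {M : Type*} [L.Structure M] {n : ℕ} (a : Fin n → M) : NType L n :=
  ⟨0, { φ | ∃ ψ : L.Formula (Fin n),
    IsUniversalFormula L ψ ∧ ψ.Realize a ∧ φ = ψ.relabel Sum.inl }⟩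

/-- A universal type is existentially supported over a class `K` if some existential formula,
satisfiable in `K`, forces its realization throughout `K`. -/
def ESupported {T : L.Theory} {n : ℕ} (K : Set (Σ M : Theory.ModelType.{0, 0, 0} T, Fin n → M))
    (p : NType L n) : Prop :=
  ∃ φ : L.Formula (Fin n ⊕ Fin p.1), IsExistentialFormula L φ ∧
    (∃ P ∈ K, ∃ v : Fin p.1 → P.1, φ.Realize (Sum.elim P.2 v)) ∧
    ∀ P ∈ K, ∀ v : Fin p.1 → P.1, φ.Realize (Sum.elim P.2 v) →
      ∀ ψ ∈ p.2, ψ.Realize (Sum.elim P.2 v)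

/-- `Rk`: the rank defined from universal types and existential supports. -/
def URankEq (T : L.Theory) (n : ℕ) : Ordinal.{0} → Theory.ModelType.{0, 0, 0} T → Prop :=
  Ordinal.lt_wf.fix fun α ih M =>
    1 ≤ α ∧ (∃ a : Fin n → M, Generates L a) ∧
      ∀ a : Fin n → M, Generates L a →
        ESupported
          { P : Σ N : Theory.ModelType.{0, 0, 0} T, Fin n → N |
            ¬ RealizesNType (L := L) P.2 (pType L n) ∧
            ∀ β : Ordinal, (h : β < α) → ∀ N : Theory.ModelType.{0, 0, 0} T, ih β h N →
              ∀ b : Fin n → N, Generates L b → ¬ RealizesNType (L := L) P.2 (utype b) }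
          (utype a)

/-- The class `K(T|Q_{n,α})` of the universal rank. -/
def UKclass (T : L.Theory) (n : ℕ) (α : Ordinal.{0}) :
    Set (Σ M : Theory.ModelType.{0, 0, 0} T, Fin n → M) :=
  { P | ¬ RealizesNType (L := L) P.2 (pType L n) ∧
    ∀ β : Ordinal, β < α → ∀ N : Theory.ModelType.{0, 0, 0} T, URankEq T n β N →
      ∀ b : Fin n → N, Generates L b → ¬ RealizesNType (L := L) P.2 (utype b) }

/-! ### Types in finitely many variables, classes of models, omitting types -/

variable (L) in
/-- A type in finitely many variables. -/
def MType : Type := Σ k : ℕ, Set (L.Formula (Fin k))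

variable (L) in
/-- A type all of whose formulas are universal. -/
def IsUniversalMType (p : MType L) : Prop := ∀ φ ∈ p.2, IsUniversalFormula L φ

/-- A model realizes a type if some tuple satisfies all of its formulas. -/
def MRealizes {T : L.Theory} (M : Theory.ModelType.{0, 0, 0} T) (p : MType L) : Prop :=
  ∃ v : Fin p.1 → M, ∀ φ ∈ p.2, φ.Realize v

/-- The class `K(T|P)` of models of `T` omitting every type in `P`. -/
def KTP (T : L.Theory) (P : Set (MType L)) : Set (Theory.ModelType.{0, 0, 0} T) :=
  { M | ∀ p ∈ P, ¬ MRealizes M p }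

/-- A type is supported over a class `K` of models of `T`. -/
def MSupported {T : L.Theory} (K : Set (Theory.ModelType.{0, 0, 0} T)) (q : MType L) : Prop :=
  ∃ φ : L.Formula (Fin q.1),
    (∃ M ∈ K, ∃ v : Fin q.1 → M, φ.Realize v) ∧
    ∀ M ∈ K, ∀ v : Fin q.1 → M, φ.Realize v → ∀ ψ ∈ q.2, ψ.Realize v

/-- A universal type is existentially supported over a class `K` of models of `T`. -/
def MESupported {T : L.Theory} (K : Set (Theory.ModelType.{0, 0, 0} T)) (q : MType L) : Prop :=
  ∃ φ : L.Formula (Fin q.1), IsExistentialFormula L φ ∧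
    (∃ M ∈ K, ∃ v : Fin q.1 → M, φ.Realize v) ∧
    ∀ M ∈ K, ∀ v : Fin q.1 → M, φ.Realize v → ∀ ψ ∈ q.2, ψ.Realize v


/-! ### Groups -/

/-- The function symbols of the language of groups. -/
inductive GroupFunc : ℕ → Type
  | mul : GroupFunc 2
  | inv : GroupFunc 1
  | one : GroupFunc 0

/-- The first-order language of groups. -/
def grpLang : FirstOrder.Language.{0, 0} := ⟨GroupFunc, fun _ => Empty⟩

/-- Any group is a `grpLang`-structure. -/
instance grpStructure (G : Type*) [Group G] : grpLang.Structure G where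
  funMap {n} f v :=
    match f with
    | .mul => v 0 * v 1
    | .inv => (v 0)⁻¹
    | .one => 1
  RelMap {n} r := r.elim

/-- The universal theory `Th_∀(H)` of a group `H`. -/
def uTheoryOf (H : Type*) [Group H] : grpLang.Theory :=
  { σ | IsUniversalFormula grpLang σ ∧ H ⊨ σ }

/-- The algebraic set `V(S)` defined by a set `S ⊆ H ∗ F(x₁,…,xₙ)` of equations. -/
def Vset {H : Type} [Group H] {n : ℕ} (S : Set (Monoid.Coprod H (FreeGroup (Fin n)))) :
    Set (Fin n → H) :=
  { g | ∀ s ∈ S, Monoid.Coprod.lift (MonoidHom.id H) (FreeGroup.lift g) s = 1 }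

/-- A group `H` is equationally noetherian if every algebraic set over `H` is defined by a
finite subsystem. -/
def EquationallyNoetherian (H : Type) [Group H] : Prop :=
  ∀ (n : ℕ) (S : Set (Monoid.Coprod H (FreeGroup (Fin n)))),
    ∃ S₀ ⊆ S, S₀.Finite ∧ Vset S = Vset S₀

/-- Bundled finitely generated `H`-limit groups (with countable-universe carrier):
finitely generated groups satisfying the universal theory of `H`. -/
def LimitGroup (H : Type) [Group H] : Type 1 :=
  { G : GrpCat.{0} // Group.FG G ∧ (G : Type) ⊨ uTheoryOf H }

instance limitGroupSetoid {H : Type} [Group H] : Setoid (LimitGroup H) where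
  r A B := Nonempty ((A.1 : Type) ≃* (B.1 : Type))
  iseqv := ⟨fun A => ⟨MulEquiv.refl _⟩, fun ⟨e⟩ => ⟨e.symm⟩, fun ⟨e⟩ ⟨f⟩ => ⟨e.trans f⟩⟩

/-- `GRank H G γ` : the group `G`, as a model of `Th_∀(H)`, has universal rank `Rk(G) = γ`
(with respect to some tuple-length). -/
def GRank (H : Type) [Group H] (G : Type) [Group G] (hmod : G ⊨ uTheoryOf H)
    (γ : Ordinal.{0}) : Prop :=
  ∃ n : ℕ, URankEq (uTheoryOf H) n γ
    (@Theory.ModelType.of grpLang (uTheoryOf H) G _ hmod One.instNonempty)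

/-- `G` is `H`-determined: some finite set `X ⊆ G \ {1}` is such that every homomorphism
from `G` to an `H`-limit group killing no element of `X` is injective. -/
def HDetermined (H : Type) [Group H] (G : Type) [Group G] : Prop :=
  ∃ X : Finset G, (1 : G) ∉ X ∧
    ∀ (L' : Type) [Group L'], Group.FG L' → (L' ⊨ uTheoryOf H) →
      ∀ f : G →* L', (∀ x ∈ X, f x ≠ 1) → Function.Injective f

end Paper

namespace Paper

variable {L : FirstOrder.Language.{0, 0}}

section Aux

variable {A N' : Type*} [L.Structure A] [L.Structure N'] {n : ℕ}

lemma not_realizes_pType_iff (a : Fin n → A) :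
    ¬ RealizesNType a (pType L n) ↔ Generates L a := by
  constructor
  · intro h y
    by_contra hy
    push_neg at hy
    apply h
    refine ⟨fun _ => y, ?_⟩
    rintro φ ⟨t, rfl⟩
    change ((Term.equal (t.relabel Sum.inl) (Term.var (Sum.inr 0))).not :
      L.Formula (Fin n ⊕ Fin 1)).Realize (Sum.elim a fun _ => y)
    simp only [Formula.realize_not, Formula.realize_equal, Term.realize_relabel,
      Term.realize_var, Sum.elim_inr, Sum.elim_comp_inl]
    exact hy t
  · rintro hgen ⟨v, hv⟩
    obtain ⟨t, ht⟩ := hgen (v ⟨0, Nat.one_pos⟩)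
    have := hv _ ⟨t, rfl⟩
    change ((Term.equal (t.relabel Sum.inl) (Term.var (Sum.inr 0))).not :
      L.Formula (Fin n ⊕ Fin 1)).Realize (Sum.elim a (v : Fin 1 → A)) at this
    simp only [Formula.realize_not, Formula.realize_equal, Term.realize_relabel,
      Term.realize_var, Sum.elim_inr, Sum.elim_comp_inl] at this
    exact this ht

lemma realizesNType_ctype_iff {a : Fin n → A} {b : Fin n → N'} :
    RealizesNType (L := L) a (ctype (L := L) b) ↔
      ∀ ψ : L.Formula (Fin n), ψ.Realize b → ψ.Realize a := by
  constructor
  · rintro ⟨v, hv⟩ ψ hψ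
    have := hv (ψ.relabel Sum.inl) ⟨ψ, hψ, rfl⟩
    rwa [Formula.realize_relabel, Sum.elim_comp_inl] at this
  · intro h
    refine ⟨finZeroElim, ?_⟩
    rintro φ ⟨ψ, hψ, rfl⟩
    change (ψ.relabel (Sum.inl : Fin n → Fin n ⊕ Fin 0)).Realize
      (Sum.elim a (finZeroElim : Fin 0 → A))
    rw [Formula.realize_relabel, Sum.elim_comp_inl]
    exact h ψ hψ

lemma realizesNType_utype_iff {a : Fin n → A} {b : Fin n → N'} :
    RealizesNType (L := L) a (utype (L := L) b) ↔
      ∀ ψ : L.Formula (Fin n), IsUniversalFormula L ψ → ψ.Realize b → ψ.Realize a := by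
  constructor
  · rintro ⟨v, hv⟩ ψ hu hψ
    have := hv (ψ.relabel Sum.inl) ⟨ψ, hu, hψ, rfl⟩
    rwa [Formula.realize_relabel, Sum.elim_comp_inl] at this
  · intro h
    refine ⟨finZeroElim, ?_⟩
    rintro φ ⟨ψ, hu, hψ, rfl⟩
    change (ψ.relabel (Sum.inl : Fin n → Fin n ⊕ Fin 0)).Realize
      (Sum.elim a (finZeroElim : Fin 0 → A))
    rw [Formula.realize_relabel, Sum.elim_comp_inl]
    exact h ψ hu hψ

lemma realizes_ctype_self (a : Fin n → A) : RealizesNType (L := L) a (ctype (L := L) a) :=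
  realizesNType_ctype_iff.2 fun _ h => h

lemma realizes_utype_of_ctype {a : Fin n → A} {b : Fin n → N'}
    (h : RealizesNType (L := L) a (ctype (L := L) b)) :
    RealizesNType (L := L) a (utype (L := L) b) :=
  realizesNType_utype_iff.2 fun ψ _ hψ => realizesNType_ctype_iff.1 h ψ hψ

lemma isQF_isUniversal {φ : L.Formula (Fin n)} (h : φ.IsQF) : IsUniversalFormula L φ :=
  ⟨0, φ, h, rfl⟩

lemma qf_transfer {c : Fin n → A} {b : Fin n → N'}
    (H : ∀ ψ : L.Formula (Fin n), IsUniversalFormula L ψ → ψ.Realize b → ψ.Realize c)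
    {ψ : L.Formula (Fin n)} (h : ψ.IsQF) : ψ.Realize b ↔ ψ.Realize c := by
  constructor
  · exact H ψ (isQF_isUniversal h)
  · intro hc
    by_contra hb
    have := H ψ.not (isQF_isUniversal h.not) (Formula.realize_not.2 hb)
    rw [Formula.realize_not] at this
    exact this hc

/-- The key isomorphism lemma: if `c` generates `A`, `b` generates `N'`, and every universal
formula true of `b` is true of `c`, then there is an isomorphism sending `b` to `c`. -/
lemma exists_equiv {c : Fin n → A} {b : Fin n → N'}
    (hc : Generates L c) (hb : Generates L b)
    (H : ∀ ψ : L.Formula (Fin n), IsUniversalFormula L ψ → ψ.Realize b → ψ.Realize c) :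
    ∃ e : N' ≃[L] A, (e : N' → A) ∘ b = c := by
  classical
  have heq : ∀ t s : L.Term (Fin n), t.realize b = s.realize b ↔ t.realize c = s.realize c := by
    intro t s
    have e1 : (t.equal s).Realize b ↔ (t.equal s).Realize c :=
      qf_transfer H ((BoundedFormula.IsAtomic.equal _ _).isQF)
    rwa [Formula.realize_equal, Formula.realize_equal] at e1
  have heqrel : ∀ {m : ℕ} (r : L.Relations m) (ts : Fin m → L.Term (Fin n)),
      (Structure.RelMap r fun i => (ts i).realize b) ↔
        (Structure.RelMap r fun i => (ts i).realize c) := by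
    intro m r ts
    have e2 : (r.formula ts).Realize b ↔ (r.formula ts).Realize c :=
      qf_transfer H ((BoundedFormula.IsAtomic.rel _ _).isQF)
    rwa [Formula.realize_rel, Formula.realize_rel] at e2
  choose g hg using hb
  set f : N' → A := fun y => (g y).realize c with hfdef
  have hf : ∀ t : L.Term (Fin n), f (t.realize b) = t.realize c :=
    fun t => (heq (g (t.realize b)) t).1 (hg (t.realize b))
  have hinj : Function.Injective f := by
    intro y y' hyy
    have h3 := (heq (g y) (g y')).2 hyy
    rw [hg y, hg y'] at h3
    exact h3
  have hsurj : Function.Surjective f := by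
    intro x
    obtain ⟨t, ht⟩ := hc x
    exact ⟨t.realize b, (hf t).trans ht⟩
  have hfun : ∀ {m : ℕ} (gg : L.Functions m) (v : Fin m → N'),
      f (Structure.funMap gg v) = Structure.funMap gg (f ∘ v) := by
    intro m gg v
    have h1 : Structure.funMap gg v = (Term.func gg fun i => g (v i)).realize b := by
      simp only [Term.realize, hg]
    have h2 : f ∘ v = fun i => (g (v i)).realize c := rfl
    rw [h1, hf, h2]
    simp only [Term.realize]
  have hrel : ∀ {m : ℕ} (r : L.Relations m) (v : Fin m → N'),
      Structure.RelMap r (f ∘ v) ↔ Structure.RelMap r v := by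
    intro m r v
    have h3 := heqrel r (fun i => g (v i))
    have h4 : (fun i => (g (v i)).realize b) = v := funext fun i => hg (v i)
    rw [h4] at h3
    have h5 : f ∘ v = fun i => (g (v i)).realize c := rfl
    rw [h5]
    exact h3.symm
  refine ⟨{ toEquiv := Equiv.ofBijective f ⟨hinj, hsurj⟩,
            map_fun' := fun gg v => hfun gg v,
            map_rel' := fun r v => hrel r v }, ?_⟩
  funext i
  exact hf (Term.var i)

lemma realize_formula_equiv (e : N' ≃[L] A) {b : Fin n → N'} {c : Fin n → A}
    (he : (e : N' → A) ∘ b = c) (ψ : L.Formula (Fin n)) :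
    ψ.Realize b ↔ ψ.Realize c := by
  rw [← he]
  exact (StrongHomClass.realize_formula e ψ).symm

lemma generates_comp_equiv (e : N' ≃[L] A) {b : Fin n → N'} (hb : Generates L b) :
    Generates L ((e : N' → A) ∘ b) := by
  intro y
  obtain ⟨t, ht⟩ := hb (e.symm y)
  refine ⟨t, ?_⟩
  rw [HomClass.realize_term, ht]
  simp

lemma ctype_comp_equiv (e : N' ≃[L] A) (b : Fin n → N') :
    ctype (L := L) ((e : N' → A) ∘ b) = ctype (L := L) b := by
  refine congrArg (Sigma.mk 0) ?_
  ext φ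
  constructor
  · rintro ⟨ψ, hψ, rfl⟩
    exact ⟨ψ, (StrongHomClass.realize_formula e ψ).1 hψ, rfl⟩
  · rintro ⟨ψ, hψ, rfl⟩
    exact ⟨ψ, (StrongHomClass.realize_formula e ψ).2 hψ, rfl⟩

end Aux

lemma rankEq_iff {T : L.Theory} {n : ℕ} {α : Ordinal.{0}} {M : Theory.ModelType.{0, 0, 0} T} :
    RankEq T n α M ↔ 1 ≤ α ∧ (∃ a : Fin n → M, Generates L a) ∧
      ∀ a : Fin n → M, Generates L a → Supported (Kclass T n α) (ctype a) := by
  rw [RankEq, WellFounded.fix_eq]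
  exact Iff.rfl

lemma urankEq_iff {T : L.Theory} {n : ℕ} {α : Ordinal.{0}} {M : Theory.ModelType.{0, 0, 0} T} :
    URankEq T n α M ↔ 1 ≤ α ∧ (∃ a : Fin n → M, Generates L a) ∧
      ∀ a : Fin n → M, Generates L a → ESupported (UKclass T n α) (utype a) := by
  rw [URankEq, WellFounded.fix_eq]
  exact Iff.rfl

lemma rankEq_of_equiv {T : L.Theory} {n : ℕ} {α : Ordinal.{0}}
    {M N : Theory.ModelType.{0, 0, 0} T} (e : (M : Type) ≃[L] N)
    (h : RankEq T n α M) : RankEq T n α N := by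
  rw [rankEq_iff] at h ⊢
  obtain ⟨h1, ⟨a, ha⟩, h3⟩ := h
  refine ⟨h1, ⟨(e : M → N) ∘ a, generates_comp_equiv e ha⟩, fun b hbgen => ?_⟩
  have hgen' : Generates L ((e.symm : N → M) ∘ b) := generates_comp_equiv e.symm hbgen
  have := h3 _ hgen'
  rwa [ctype_comp_equiv e.symm b] at this

/-- The main induction: a model of universal rank `γ` has rank `≤ γ`. -/
lemma main_induction (T : L.Theory) (n : ℕ) :
    ∀ γ : Ordinal.{0}, ∀ M : Theory.ModelType.{0, 0, 0} T,
      URankEq T n γ M → ∃ δ : Ordinal, δ ≤ γ ∧ RankEq T n δ M := by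
  intro γ
  induction γ using Ordinal.induction with
  | h γ IH =>
    intro M hU
    by_cases hlow : ∃ δ : Ordinal, δ < γ ∧ RankEq T n δ M
    · obtain ⟨δ, hδ, h⟩ := hlow
      exact ⟨δ, hδ.le, h⟩
    push_neg at hlow
    refine ⟨γ, le_rfl, ?_⟩
    rw [urankEq_iff] at hU
    obtain ⟨h1, hg, hsup⟩ := hU
    rw [rankEq_iff]
    refine ⟨h1, hg, fun a ha => ?_⟩
    obtain ⟨φ, _hexφ, hsat, hforce⟩ := hsup a ha
    -- Kclass ⊆ UKclass, using the induction hypothesis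
    have hKU : Kclass T n γ ⊆ UKclass T n γ := by
      rintro P ⟨hP1, hP2⟩
      have hPgen : Generates L P.2 := (not_realizes_pType_iff _).1 hP1
      refine ⟨hP1, fun β hβ N hN b hbgen hreal => ?_⟩
      obtain ⟨e, he⟩ := exists_equiv hPgen hbgen (realizesNType_utype_iff.1 hreal)
      obtain ⟨δ, hδβ, hδ⟩ := IH β hβ N hN
      exact hP2 δ (lt_of_le_of_lt hδβ hβ) P.1 (rankEq_of_equiv e hδ) P.2 hPgen
        (realizes_ctype_self P.2)
    -- any member of UKclass realizing φ is isomorphic to (M, a)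
    have hiso : ∀ P ∈ UKclass T n γ, ∀ v : Fin 0 → (P.1 : Type),
        φ.Realize (Sum.elim P.2 v) → ∃ e : (M : Type) ≃[L] P.1, (e : M → P.1) ∘ a = P.2 := by
      intro P hP v hv
      have hPgen : Generates L P.2 := (not_realizes_pType_iff _).1 hP.1
      have hut : RealizesNType P.2 (utype a) := ⟨v, hforce P hP v hv⟩
      exact exists_equiv hPgen ha (realizesNType_utype_iff.1 hut)
    obtain ⟨P, hP, v, hv⟩ := hsat
    obtain ⟨e, he⟩ := hiso P hP v hv
    -- (M, a) itself is a member of Kclass γ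
    have hMa : (⟨M, a⟩ : Σ N : Theory.ModelType.{0, 0, 0} T, Fin n → N) ∈ Kclass T n γ := by
      refine ⟨(not_realizes_pType_iff a).2 ha, fun β hβ N hN b hbgen hreal => ?_⟩
      obtain ⟨e', he'⟩ := exists_equiv ha hbgen
        (realizesNType_utype_iff.1 (realizes_utype_of_ctype hreal))
      exact hlow β hβ (rankEq_of_equiv e' hN)
    -- (M, a) realizes φ, transported along the isomorphism
    have hMφ : φ.Realize (Sum.elim a (finZeroElim : Fin 0 → (M : Type))) := by
      have hcomp : (e : M → P.1) ∘ Sum.elim a finZeroElim = Sum.elim P.2 v := by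
        funext x
        cases x with
        | inl i =>
          show (e : M → P.1) (a i) = P.2 i
          rw [← he]
          rfl
        | inr i => exact i.elim0
      rw [← StrongHomClass.realize_formula e φ
        (v := Sum.elim a (finZeroElim : Fin 0 → (M : Type)))]
      exact (congrArg φ.Realize hcomp).mpr hv
    refine ⟨φ, ⟨⟨M, a⟩, hMa, finZeroElim, hMφ⟩, ?_⟩
    -- forcing: every member of Kclass realizing φ realizes the complete type of a
    intro Q hQ w hw ψ hψ
    obtain ⟨e'', he''⟩ := hiso Q (hKU hQ) w hw
    obtain ⟨ψ₀, hψ₀, rfl⟩ := hψ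
    change (ψ₀.relabel (Sum.inl : Fin n → Fin n ⊕ Fin 0)).Realize
      (Sum.elim Q.2 (fun i : Fin 0 => (w i : (Q.1 : Type))))
    rw [Formula.realize_relabel, Sum.elim_comp_inl]
    exact (realize_formula_equiv e'' he'' ψ₀).1 hψ₀

end Paper

/-- For an `n`-consistent `∀∃`-theory `T`, every `n`-generated model `M`
satisfies `rk(M) ≤ Rk(M)` (whenever `Rk(M)` is an ordinal, `rk(M)` is an ordinal `≤` it). -/
theorem stmt_14 (L : FirstOrder.Language.{0, 0}) [Countable L.Symbols] (T : L.Theory)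
    (hAE : Paper.IsAETheory L T) (n : ℕ) (hcons : Paper.NConsistent L T n)
    (M : FirstOrder.Language.Theory.ModelType.{0, 0, 0} T)
    (hgen : ∃ a : Fin n → M, Paper.Generates L a) :
    ∀ γ : Ordinal, Paper.URankEq T n γ M →
      ∃ δ : Ordinal, δ ≤ γ ∧ Paper.RankEq T n δ M :=
  fun γ => Paper.main_induction T n γ M
end

section
/- Let H be an equationally noetherian group. Then there are at most countably many isomorphism classes of finitely generated groups satisfying the universal theory of H (i.e., finitely generated H-limit groups). -/
open FirstOrder FirstOrder.Language Cardinal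

namespace Stmt16Aux
open Paper

def tone {α : Type} : grpLang.Term α := Term.func GroupFunc.one ![]
def tinv {α : Type} (t : grpLang.Term α) : grpLang.Term α := Term.func GroupFunc.inv ![t]
def tmul {α : Type} (s t : grpLang.Term α) : grpLang.Term α := Term.func GroupFunc.mul ![s, t]

@[simp] lemma realize_tone {α : Type} {M : Type*} [Group M] {v : α → M} :
    (tone : grpLang.Term α).realize v = 1 := rfl
@[simp] lemma realize_tinv {α : Type} {M : Type*} [Group M] {v : α → M} {t : grpLang.Term α} :
    (tinv t).realize v = (t.realize v)⁻¹ := rfl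
@[simp] lemma realize_tmul {α : Type} {M : Type*} [Group M] {v : α → M} {s t : grpLang.Term α} :
    (tmul s t).realize v = s.realize v * t.realize v := rfl

/-- Term associated to a word. -/
def termOfList {n : ℕ} : List (Fin n × Bool) → grpLang.Term (Fin n)
  | [] => tone
  | p :: L => tmul (if p.2 then Term.var p.1 else tinv (Term.var p.1)) (termOfList L)

lemma realize_termOfList {n : ℕ} {M : Type*} [Group M] (v : Fin n → M) :
    ∀ L : List (Fin n × Bool),
      (termOfList L).realize v = (L.map fun x => cond x.2 (v x.1) (v x.1)⁻¹).prod
  | [] => by simp [termOfList]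
  | p :: L => by
      cases hb : p.2 <;>
      simp [termOfList, hb, realize_termOfList v L]

/-- Term associated to an element of the free group. -/
def termOf {n : ℕ} (w : FreeGroup (Fin n)) : grpLang.Term (Fin n) :=
  termOfList w.toWord

lemma realize_termOf {n : ℕ} {M : Type*} [Group M] (v : Fin n → M) (w : FreeGroup (Fin n)) :
    (termOf w).realize v = FreeGroup.lift v w := by
  conv_rhs => rw [← FreeGroup.mk_toWord (x := w)]
  rw [termOf, realize_termOfList, FreeGroup.lift_mk]

/-- The atomic formula `w(x̄) = 1`. -/
def eqOne {n : ℕ} (w : FreeGroup (Fin n)) : grpLang.BoundedFormula Empty n :=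
  Term.bdEqual ((termOf w).relabel Sum.inr) tone

lemma realize_eqOne {n : ℕ} {M : Type*} [Group M] (v : Empty → M) (xs : Fin n → M)
    (w : FreeGroup (Fin n)) :
    (eqOne w).Realize v xs ↔ FreeGroup.lift xs w = 1 := by
  simp [eqOne, Term.realize_relabel, realize_termOf, Sum.elim_comp_inr]

/-- `s₁ = 1 → ⋯ → s_m = 1 → w = 1`. -/
def impsForm {n : ℕ} (S : List (FreeGroup (Fin n))) (w : FreeGroup (Fin n)) :
    grpLang.BoundedFormula Empty n :=
  S.foldr (fun s acc => (eqOne s).imp acc) (eqOne w)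

lemma impsForm_isQF {n : ℕ} (S : List (FreeGroup (Fin n))) (w : FreeGroup (Fin n)) :
    (impsForm S w).IsQF := by
  induction S with
  | nil => exact (BoundedFormula.IsAtomic.equal _ _).isQF
  | cons s S ih => exact ((BoundedFormula.IsAtomic.equal _ _).isQF).imp ih

lemma realize_impsForm {n : ℕ} {M : Type*} [Group M] (v : Empty → M) (xs : Fin n → M)
    (S : List (FreeGroup (Fin n))) (w : FreeGroup (Fin n)) :
    (impsForm S w).Realize v xs ↔
      ((∀ s ∈ S, FreeGroup.lift xs s = 1) → FreeGroup.lift xs w = 1) := by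
  induction S with
  | nil => simp [impsForm, realize_eqOne]
  | cons s S ih =>
      simp only [impsForm, List.foldr_cons, BoundedFormula.realize_imp, realize_eqOne,
        List.forall_mem_cons] at *
      rw [ih]; tauto

/-- The universal sentence `∀ x̄, (s₁(x̄) = 1 → ⋯ → w(x̄) = 1)`. -/
def sent {n : ℕ} (S : List (FreeGroup (Fin n))) (w : FreeGroup (Fin n)) : grpLang.Sentence :=
  (impsForm S w).alls

lemma realize_sent {n : ℕ} {M : Type*} [Group M] (S : List (FreeGroup (Fin n)))
    (w : FreeGroup (Fin n)) :
    M ⊨ sent S w ↔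
      ∀ xs : Fin n → M, (∀ s ∈ S, FreeGroup.lift xs s = 1) → FreeGroup.lift xs w = 1 := by
  have h0 : (M ⊨ sent S w) ↔ ∀ xs : Fin n → M, (impsForm S w).Realize default xs :=
    BoundedFormula.realize_alls
  rw [h0]
  exact forall_congr' fun xs => realize_impsForm _ xs S w

lemma sent_mem {n : ℕ} {H : Type} [Group H] {S : List (FreeGroup (Fin n))}
    {w : FreeGroup (Fin n)}
    (h : ∀ xs : Fin n → H, (∀ s ∈ S, FreeGroup.lift xs s = 1) → FreeGroup.lift xs w = 1) :
    sent S w ∈ uTheoryOf H :=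
  ⟨⟨n, impsForm S w, impsForm_isQF S w, rfl⟩, (realize_sent S w).mpr h⟩

end Stmt16Aux

namespace Stmt16Aux
open Paper

/-- The subgroup of words killed by every solution of `S` in `H`. -/
def kerOf (H : Type) [Group H] {n : ℕ} (S : List (FreeGroup (Fin n))) :
    Subgroup (FreeGroup (Fin n)) :=
  ⨅ h : { h : Fin n → H // ∀ s ∈ S, FreeGroup.lift h s = 1 }, (FreeGroup.lift h.1).ker

lemma mem_kerOf {H : Type} [Group H] {n : ℕ} {S : List (FreeGroup (Fin n))}
    {w : FreeGroup (Fin n)} :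
    w ∈ kerOf H S ↔
      ∀ h : Fin n → H, (∀ s ∈ S, FreeGroup.lift h s = 1) → FreeGroup.lift h w = 1 := by
  simp [kerOf, Subgroup.mem_iInf, MonoidHom.mem_ker, Subtype.forall]

/-- Existence of finite determining data for a f.g. limit group. -/
lemma exists_data (H : Type) [Group H] (hH : EquationallyNoetherian H)
    (G : Type) [Group G] (hfg : Group.FG G) (hmod : G ⊨ uTheoryOf H) :
    ∃ (n : ℕ) (S : List (FreeGroup (Fin n))) (g : Fin n → G),
      Function.Surjective (FreeGroup.lift g : FreeGroup (Fin n) →* G) ∧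
      (FreeGroup.lift g : FreeGroup (Fin n) →* G).ker = kerOf H S := by
  classical
  obtain ⟨Sset, hScl, hSfin⟩ := Group.fg_iff.mp hfg
  set n := hSfin.toFinset.card with hn
  set g : Fin n → G := fun i => ((hSfin.toFinset.equivFin.symm i : hSfin.toFinset) : G) with hg
  have hrange : Set.range g = Sset := by
    have h1 : Set.range g =
        (fun x : hSfin.toFinset => (x : G)) '' Set.range hSfin.toFinset.equivFin.symm := by
      rw [hg, ← Set.range_comp]; rfl
    rw [h1, Set.range_eq_univ.mpr hSfin.toFinset.equivFin.symm.surjective, Set.image_univ,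
      Subtype.range_coe_subtype]
    ext x
    simp [hSfin.mem_toFinset]
  have hsur : Function.Surjective (FreeGroup.lift g : FreeGroup (Fin n) →* G) := by
    rw [← MonoidHom.range_eq_top, FreeGroup.range_lift_eq_closure, hrange, hScl]
  set N := (FreeGroup.lift g : FreeGroup (Fin n) →* G).ker with hN
  obtain ⟨S₀', hsub, hfin, hVeq⟩ :=
    hH n ((Monoid.Coprod.inr : FreeGroup (Fin n) →* _) '' (N : Set (FreeGroup (Fin n))))
  set T : Set (FreeGroup (Fin n)) := (Monoid.Coprod.inr : FreeGroup (Fin n) →* _) ⁻¹' S₀'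
    with hT
  have hTfin : T.Finite := hfin.preimage Monoid.Coprod.inr_injective.injOn
  have hTN : T ⊆ (N : Set (FreeGroup (Fin n))) := by
    intro t ht
    obtain ⟨u, hu, huv⟩ := hsub ht
    rwa [← Monoid.Coprod.inr_injective huv]
  have hTim : (Monoid.Coprod.inr : FreeGroup (Fin n) →* _) '' T = S₀' :=
    Set.image_preimage_eq_of_subset (hsub.trans (Set.image_subset_range _ _))
  set S : List (FreeGroup (Fin n)) := hTfin.toFinset.toList with hS
  have hSmem : ∀ s, s ∈ S ↔ s ∈ T := by
    intro s; rw [hS, Finset.mem_toList, Set.Finite.mem_toFinset]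
  have hsolve : ∀ h : Fin n → H, (∀ s ∈ S, FreeGroup.lift h s = 1) ↔
      (∀ u ∈ N, FreeGroup.lift h u = 1) := by
    intro h
    have h1 : h ∈ Vset S₀' ↔ ∀ s ∈ S, FreeGroup.lift h s = 1 := by
      constructor
      · intro hv s hs
        have := hv (Monoid.Coprod.inr s) (hTim ▸ Set.mem_image_of_mem _ ((hSmem s).mp hs))
        simpa [Monoid.Coprod.lift_apply_inr] using this
      · intro hall x hx
        rw [← hTim] at hx
        obtain ⟨s, hs, rfl⟩ := hx
        simpa [Monoid.Coprod.lift_apply_inr] using hall s ((hSmem s).mpr hs)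
    have h2 : h ∈ Vset ((Monoid.Coprod.inr : FreeGroup (Fin n) →* _) ''
        (N : Set (FreeGroup (Fin n)))) ↔ ∀ u ∈ N, FreeGroup.lift h u = 1 := by
      constructor
      · intro hv u hu
        have := hv (Monoid.Coprod.inr u) (Set.mem_image_of_mem _ hu)
        simpa [Monoid.Coprod.lift_apply_inr] using this
      · intro hall x hx
        obtain ⟨u, hu, rfl⟩ := hx
        simpa [Monoid.Coprod.lift_apply_inr] using hall u hu
    rw [← h1, ← h2, hVeq]
  refine ⟨n, S, g, hsur, le_antisymm ?_ ?_⟩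
  · intro w hw
    rw [mem_kerOf]
    intro h hh
    exact (hsolve h).mp hh w hw
  · intro w hw
    rw [mem_kerOf] at hw
    by_contra hwk
    have hmem : sent S w ∈ uTheoryOf H := sent_mem hw
    have hG : G ⊨ sent S w := hmod.realize_of_mem _ hmem
    exact hwk ((realize_sent S w).mp hG g (fun s hs => hTN ((hSmem s).mp hs)))

/-- Equal data implies isomorphic. -/
lemma iso_of_data (H : Type) [Group H] {G G' : Type} [Group G] [Group G'] {n : ℕ}
    {S : List (FreeGroup (Fin n))} {g : Fin n → G} {g' : Fin n → G'}
    (hs : Function.Surjective (FreeGroup.lift g : FreeGroup (Fin n) →* G))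
    (hs' : Function.Surjective (FreeGroup.lift g' : FreeGroup (Fin n) →* G'))
    (hk : (FreeGroup.lift g : FreeGroup (Fin n) →* G).ker = kerOf H S)
    (hk' : (FreeGroup.lift g' : FreeGroup (Fin n) →* G').ker = kerOf H S) :
    Nonempty (G ≃* G') :=
  ⟨((QuotientGroup.quotientKerEquivOfSurjective _ hs).symm.trans
      (QuotientGroup.quotientMulEquivOfEq (hk.trans hk'.symm))).trans
    (QuotientGroup.quotientKerEquivOfSurjective _ hs')⟩

instance freeGroupCountable {n : ℕ} : Countable (FreeGroup (Fin n)) :=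
  Function.Surjective.countable (f := fun L : List (Fin n × Bool) => FreeGroup.mk L)
    (fun x => ⟨x.toWord, FreeGroup.mk_toWord⟩)

end Stmt16Aux

/-- An equationally noetherian group `H` has at most countably many
finitely generated limit groups, up to isomorphism. -/
theorem stmt_16 (H : Type) [Group H] (hH : Paper.EquationallyNoetherian H) :
    Cardinal.mk (Quotient (Paper.limitGroupSetoid (H := H))) ≤ Cardinal.aleph0 := by
  classical
  rw [Cardinal.mk_le_aleph0_iff]
  have key : ∀ q : Quotient (Paper.limitGroupSetoid (H := H)),
      ∃ d : Σ n : ℕ, List (FreeGroup (Fin n)),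
        ∃ g : Fin d.1 → (q.out.1 : Type),
          Function.Surjective (FreeGroup.lift g : FreeGroup (Fin d.1) →* _) ∧
          (FreeGroup.lift g : FreeGroup (Fin d.1) →* _).ker = Stmt16Aux.kerOf H d.2 := by
    intro q
    obtain ⟨n, S, g, h1, h2⟩ :=
      Stmt16Aux.exists_data H hH (q.out.1 : Type) q.out.2.1 q.out.2.2
    exact ⟨⟨n, S⟩, g, h1, h2⟩
  choose f hf using key
  have hinj : Function.Injective f := by
    intro q q' he
    have hq := hf q
    rw [he] at hq
    obtain ⟨g, hs, hk⟩ := hq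
    obtain ⟨g', hs', hk'⟩ := hf q'
    have hiso : Nonempty ((q.out.1 : Type) ≃* (q'.out.1 : Type)) :=
      Stmt16Aux.iso_of_data H hs hs' hk hk'
    calc q = ⟦q.out⟧ := q.out_eq.symm
      _ = ⟦q'.out⟧ := Quotient.sound hiso
      _ = q' := q'.out_eq
  exact hinj.countable
end
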